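/- arXiv:1909.02421 — 4 statements merged into one kernel-verified Lean document; each statement's English description precedes it below -/
import Mathlib

section
/- Consider the 2-swap game with 10 strategic agents (5 red, 5 blue) whose topology is the tree with a root node α, three children β₁, β₂, β₃ of α, and two leaf children of each βᵢ (10 nodes total). This game admits no equilibrium assignment: for every bijective assignment of the 10 agents to the 10 nodes there exist a red agent and a blue agent who can both strictly increase their utility by swapping positions. -/
open Finset

namespace SwapGame

/-- Build a simple graph from a (not necessarily symmetric) boolean relation
by symmetrizing it and removing loops. -/
def mkGraph {V : Type*} (r : V → V → Bool) : SimpleGraph V where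
  Adj a b := a ≠ b ∧ (r a b ∨ r b a)
  symm := ⟨fun a b h => ⟨Ne.symm h.1, Or.symm h.2⟩⟩
  loopless := ⟨fun a h => h.1 rfl⟩

instance mkGraph.instDecidableRel {V : Type*} [DecidableEq V] (r : V → V → Bool) :
    DecidableRel (mkGraph r).Adj :=
  fun a b => inferInstanceAs (Decidable (a ≠ b ∧ (r a b ∨ r b a)))

variable {A V K : Type*} [Fintype V] [DecidableEq A] [DecidableEq V] [DecidableEq K]

/-- The assignment obtained from `σ` by swapping the locations of agents `i` and `j`. -/
def swapA (σ : A ≃ V) (i j : A) : A ≃ V := (Equiv.swap i j).trans σ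

/-- The utility of agent `i` under assignment `σ`: the fraction of the neighbors of the
node of `i` that are occupied by agents of the same type (friends of `i`). -/
def util (G : SimpleGraph V) [DecidableRel G.Adj] (c : A → K) (σ : A ≃ V) (i : A) : ℚ :=
  (((G.neighborFinset (σ i)).filter (fun w => c (σ.symm w) = c i)).card : ℚ) /
    ((G.neighborFinset (σ i)).card : ℚ)

/-- Agents `i` and `j` both strictly increase their utility by swapping their locations. -/
def improving (G : SimpleGraph V) [DecidableRel G.Adj] (c : A → K) (σ : A ≃ V)
    (i j : A) : Prop :=
  util G c σ i < util G c (swapA σ i j) i ∧ util G c σ j < util G c (swapA σ i j) j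

/-- An assignment is an equilibrium if no pair of agents can both strictly increase
their utility by swapping positions. -/
def isEquilibrium (G : SimpleGraph V) [DecidableRel G.Adj] (c : A → K) (σ : A ≃ V) : Prop :=
  ¬ ∃ i j : A, improving G c σ i j

/-- The social welfare of an assignment: the sum of the utilities of all agents. -/
def SW [Fintype A] (G : SimpleGraph V) [DecidableRel G.Adj] (c : A → K) (σ : A ≃ V) : ℚ :=
  ∑ i : A, util G c σ i

/-- Agent `i` is exposed: at least one neighbor is occupied by an agent of another type. -/
def exposed (G : SimpleGraph V) [DecidableRel G.Adj] (c : A → K) (σ : A ≃ V) (i : A) : Prop :=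
  ((G.neighborFinset (σ i)).filter (fun w => c (σ.symm w) ≠ c i)).Nonempty

instance exposed.instDecidable (G : SimpleGraph V) [DecidableRel G.Adj] (c : A → K)
    (σ : A ≃ V) : DecidablePred (exposed G c σ) :=
  fun _ => inferInstanceAs (Decidable (Finset.Nonempty _))

/-- The degree of integration of an assignment: the number of exposed agents. -/
def DI [Fintype A] (G : SimpleGraph V) [DecidableRel G.Adj] (c : A → K) (σ : A ≃ V) : ℕ :=
  (univ.filter (fun i : A => exposed G c σ i)).card

end SwapGame

namespace SwapGame

/-- The 10-node tree: a root `α`, three children `β₁,β₂,β₃`, and two leaf children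
of each `βᵢ`. -/
inductive V10 where
  | root : V10
  | mid : Fin 3 → V10
  | leaf : Fin 3 → Fin 2 → V10
  deriving DecidableEq, Fintype

def adj10 : V10 → V10 → Bool
  | .root, .mid _ => true
  | .mid i, .leaf j _ => i == j
  | _, _ => false

abbrev G10 : SimpleGraph V10 := mkGraph adj10

/-- Agents: 5 red (`.1 = 0`) and 5 blue (`.1 = 1`) strategic agents. -/
abbrev A10 := Fin 2 × Fin 5

/-- auxiliary: index of each node in the bit encoding of a coloring -/
def idx : V10 → ℕ
  | .root => 0
  | .mid i => 1 + i.val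
  | .leaf i j => 4 + 2 * i.val + j.val

/-- the coloring encoded by the natural number `n` -/
def chiOf (n : ℕ) (v : V10) : Fin 2 := ⟨n / 2 ^ idx v % 2, Nat.mod_lt _ two_pos⟩

/-- all ten nodes -/
def allV : Finset V10 :=
  {.root, .mid 0, .mid 1, .mid 2, .leaf 0 0, .leaf 0 1, .leaf 1 0, .leaf 1 1, .leaf 2 0, .leaf 2 1}

/-- explicit neighbor sets -/
def nbrs : V10 → Finset V10
  | .root => {.mid 0, .mid 1, .mid 2}
  | .mid i => {.root, .leaf i 0, .leaf i 1}
  | .leaf i _ => {.mid i}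

def numb (χ : V10 → Fin 2) (k : Fin 2) (v : V10) : ℕ :=
  ((nbrs v).filter (fun x => χ x = k)).card
def degb (v : V10) : ℕ := (nbrs v).card
def swapc (χ : V10 → Fin 2) (v w x : V10) : Fin 2 :=
  if x = v then χ w else if x = w then χ v else χ x

lemma univ_eq : (univ : Finset V10) = allV := by decide
lemma nbrs_eq : ∀ v : V10, G10.neighborFinset v = nbrs v := by decide
lemma degb_pos : ∀ v : V10, 0 < degb v := by decide

set_option maxRecDepth 4000 in
theorem key : ∀ n : Fin 1024,
    (allV.filter (fun v => chiOf n.val v = 0)).card = 5 →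
    ∃ v ∈ allV, ∃ w ∈ allV, chiOf n.val v = 0 ∧ chiOf n.val w = 1 ∧
      numb (chiOf n.val) 0 v * degb w < numb (swapc (chiOf n.val) v w) 0 w * degb v ∧
      numb (chiOf n.val) 1 w * degb v < numb (swapc (chiOf n.val) v w) 1 v * degb w := by
  decide

lemma util_formula (σ : A10 ≃ V10) (i : A10) :
    util G10 Prod.fst σ i = (numb (fun v => (σ.symm v).1) i.1 (σ i) : ℚ) / (degb (σ i) : ℚ) := by
  unfold util numb degb
  rw [nbrs_eq]

/-- the 2-swap game of 5 red and 5 blue strategic agents on the 10-node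
tree admits no equilibrium: for every assignment there are a red agent and a blue agent
who can both strictly increase their utility by swapping positions. -/
theorem no_equilibrium_two_types (σ : A10 ≃ V10) :
    ∃ i j : A10, i.1 = 0 ∧ j.1 = 1 ∧ improving G10 Prod.fst σ i j := by
  set χ : V10 → Fin 2 := fun v => (σ.symm v).1 with hχ
  set n : ℕ := (χ .root).val + 2 * (χ (.mid 0)).val + 4 * (χ (.mid 1)).val + 8 * (χ (.mid 2)).val
    + 16 * (χ (.leaf 0 0)).val + 32 * (χ (.leaf 0 1)).val + 64 * (χ (.leaf 1 0)).val
    + 128 * (χ (.leaf 1 1)).val + 256 * (χ (.leaf 2 0)).val + 512 * (χ (.leaf 2 1)).val with hn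
  have hb : ∀ v, (χ v).val < 2 := fun v => (χ v).isLt
  have h0 := hb .root; have h1 := hb (.mid 0); have h2 := hb (.mid 1); have h3 := hb (.mid 2)
  have h4 := hb (.leaf 0 0); have h5 := hb (.leaf 0 1); have h6 := hb (.leaf 1 0)
  have h7 := hb (.leaf 1 1); have h8 := hb (.leaf 2 0); have h9 := hb (.leaf 2 1)
  have hlt : n < 1024 := by omega
  have hfe : chiOf n = χ := by
    funext v
    apply Fin.ext
    cases v with
    | root => simp only [chiOf, idx]; norm_num; omega
    | mid i => fin_cases i <;> (simp only [chiOf, idx, Fin.reduceFinMk]; norm_num; omega)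
    | leaf i j =>
        fin_cases i <;> fin_cases j <;> (simp only [chiOf, idx, Fin.reduceFinMk]; norm_num; omega)
  have hcard : (allV.filter (fun v => chiOf n v = 0)).card = 5 := by
    rw [hfe, ← univ_eq]
    have himg : (univ.filter fun v => χ v = 0) = (univ.filter fun i : A10 => i.1 = 0).image σ := by
      ext v
      simp only [mem_filter, mem_univ, true_and, Finset.mem_image, hχ]
      constructor
      · intro h; exact ⟨σ.symm v, h, σ.apply_symm_apply v⟩
      · rintro ⟨i, h, rfl⟩; simpa using h
    rw [himg, Finset.card_image_of_injective _ σ.injective]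
    decide
  obtain ⟨v, -, w, -, hv0, hw1, ha, hb'⟩ := key ⟨n, hlt⟩ hcard
  rw [hfe] at hv0 hw1 ha hb'
  refine ⟨σ.symm v, σ.symm w, hv0, hw1, ?_, ?_⟩
  all_goals
    have hsymm : ∀ x, ((swapA σ (σ.symm v) (σ.symm w)).symm x).1 = swapc χ v w x := by
      intro x
      simp only [swapA, Equiv.symm_trans_apply, Equiv.symm_swap, Equiv.swap_apply_def,
        EmbeddingLike.apply_eq_iff_eq, swapc]
      split_ifs <;> rfl
    have hσi : (swapA σ (σ.symm v) (σ.symm w)) (σ.symm v) = w := by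
      simp [swapA, Equiv.swap_apply_left]
    have hσj : (swapA σ (σ.symm v) (σ.symm w)) (σ.symm w) = v := by
      simp [swapA, Equiv.swap_apply_right]
    have hd : ∀ u' : V10, (0:ℚ) < (degb u' : ℚ) := fun u' => by exact_mod_cast degb_pos u'
  · rw [util_formula, util_formula, hσi, Equiv.apply_symm_apply, funext hsymm, ← hχ,
      show (σ.symm v).1 = (0 : Fin 2) from hv0, div_lt_div_iff₀ (hd v) (hd w)]
    exact_mod_cast ha
  · rw [util_formula, util_formula, hσj, Equiv.apply_symm_apply, funext hsymm, ← hχ,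
      show (σ.symm w).1 = (1 : Fin 2) from hw1, div_lt_div_iff₀ (hd w) (hd v)]
    exact_mod_cast hb'


end SwapGame
end

section
/- Let k ≥ 3 and consider the k-swap game with k²−2 strategic agents of each type on the three-layer tree topology (root α, set B of k(k−1)−1 children, and k leaf children Γ_β per β ∈ B). No assignment in which every one of the k types has at least one agent occupying a node of B can be an equilibrium. -/
open Finset

namespace SwapGame

/-- The three-layer tree topology for `k`-swap games: a root, a set `B` of
`k(k-1)-1` middle nodes (children of the root), and `k` leaf children per middle node. -/
inductive TV (k : ℕ) where
  | root : TV k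
  | mid : Fin (k*(k-1)-1) → TV k
  | leaf : Fin (k*(k-1)-1) → Fin k → TV k
  deriving DecidableEq, Fintype

def adjT {k : ℕ} : TV k → TV k → Bool
  | .root, .mid _ => true
  | .mid i, .leaf j _ => i == j
  | _, _ => false

abbrev GT (k : ℕ) : SimpleGraph (TV k) := mkGraph (@adjT k)

/-- Agents: `k` types with `k^2 - 2` agents each; the type of an agent is its first
component. -/
abbrev AgT (k : ℕ) := Fin k × Fin (k^2 - 2)

end SwapGame
namespace SwapGame
variable {k : ℕ}

lemma mkGraph_adj {V : Type*} (r : V → V → Bool) (a b : V) :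
    (mkGraph r).Adj a b ↔ a ≠ b ∧ (r a b ∨ r b a) := Iff.rfl

@[simp] lemma adjT_root_mid (i : Fin (k*(k-1)-1)) : adjT (TV.root : TV k) (TV.mid i) = true := rfl
@[simp] lemma adjT_mid_root (i : Fin (k*(k-1)-1)) : adjT (TV.mid i) (TV.root : TV k) = false := rfl
@[simp] lemma adjT_mid_leaf (i j : Fin (k*(k-1)-1)) (x : Fin k) :
    adjT (TV.mid i) (TV.leaf j x) = (i == j) := rfl
@[simp] lemma adjT_leaf_mid (i j : Fin (k*(k-1)-1)) (x : Fin k) :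
    adjT (TV.leaf j x) (TV.mid i) = false := rfl
@[simp] lemma adjT_leaf_leaf (i j : Fin (k*(k-1)-1)) (x y : Fin k) :
    adjT (TV.leaf j x) (TV.leaf i y) = false := rfl
@[simp] lemma adjT_root_leaf (i : Fin (k*(k-1)-1)) (x : Fin k) :
    adjT (TV.root : TV k) (TV.leaf i x) = false := rfl
@[simp] lemma adjT_leaf_root (i : Fin (k*(k-1)-1)) (x : Fin k) :
    adjT (TV.leaf i x) (TV.root : TV k) = false := rfl
@[simp] lemma adjT_root_root : adjT (TV.root : TV k) TV.root = false := rfl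
@[simp] lemma adjT_mid_mid (i j : Fin (k*(k-1)-1)) : adjT (TV.mid i) (TV.mid j) = false := rfl

lemma adj_leaf_iff (b : Fin (k*(k-1)-1)) (x : Fin k) (w : TV k) :
    (GT k).Adj (TV.leaf b x) w ↔ w = TV.mid b := by
  cases w <;> rw [mkGraph_adj] <;> simp [eq_comm (a := b)]

lemma adj_mid_iff (b : Fin (k*(k-1)-1)) (w : TV k) :
    (GT k).Adj (TV.mid b) w ↔ w = TV.root ∨ ∃ x, w = TV.leaf b x := by
  cases w <;> rw [mkGraph_adj] <;> simp [eq_comm (a := b)]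

lemma adj_root_iff (w : TV k) :
    (GT k).Adj TV.root w ↔ ∃ b, w = TV.mid b := by
  cases w <;> rw [mkGraph_adj] <;> simp

lemma nbhd_leaf (b : Fin (k*(k-1)-1)) (x : Fin k) :
    (GT k).neighborFinset (TV.leaf b x) = {TV.mid b} := by
  ext w; simp [SimpleGraph.mem_neighborFinset, adj_leaf_iff]

lemma nbhd_mid (b : Fin (k*(k-1)-1)) :
    (GT k).neighborFinset (TV.mid b) = insert TV.root (univ.image (TV.leaf b)) := by
  ext w; simp [SimpleGraph.mem_neighborFinset, adj_mid_iff, eq_comm (a := w)]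

lemma nbhd_root :
    (GT k).neighborFinset (TV.root : TV k) = univ.image TV.mid := by
  ext w; simp [SimpleGraph.mem_neighborFinset, adj_root_iff, eq_comm (a := w)]
variable {k : ℕ}

lemma util_leaf (ρ : AgT k ≃ TV k) (a : AgT k) (b : Fin (k*(k-1)-1)) (x : Fin k)
    (h : ρ a = TV.leaf b x) :
    util (GT k) Prod.fst ρ a = if (ρ.symm (TV.mid b)).1 = a.1 then 1 else 0 := by
  unfold util
  rw [h, nbhd_leaf]
  by_cases hc : (ρ.symm (TV.mid b)).1 = a.1 <;> simp [Finset.filter_singleton, hc]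

lemma util_pos (ρ : AgT k ≃ TV k) (a : AgT k) (w : TV k)
    (hw : w ∈ (GT k).neighborFinset (ρ a)) (ht : (ρ.symm w).1 = a.1) :
    0 < util (GT k) Prod.fst ρ a := by
  unfold util
  apply div_pos
  · have hmem : w ∈ ((GT k).neighborFinset (ρ a)).filter
        (fun w => (ρ.symm w).1 = a.1) := Finset.mem_filter.2 ⟨hw, ht⟩
    exact_mod_cast Finset.card_pos.2 ⟨w, hmem⟩
  · exact_mod_cast Finset.card_pos.2 ⟨w, hw⟩

lemma util_lt_one (ρ : AgT k ≃ TV k) (a : AgT k) (w : TV k)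
    (hw : w ∈ (GT k).neighborFinset (ρ a)) (ht : (ρ.symm w).1 ≠ a.1) :
    util (GT k) Prod.fst ρ a < 1 := by
  unfold util
  rw [div_lt_one (by exact_mod_cast Finset.card_pos.2 ⟨w, hw⟩)]
  have hss : ((GT k).neighborFinset (ρ a)).filter (fun w => (ρ.symm w).1 = a.1)
      ⊂ (GT k).neighborFinset (ρ a) := by
    refine Finset.ssubset_iff_of_subset (Finset.filter_subset _ _) |>.2 ⟨w, hw, ?_⟩
    simp [ht]
  exact_mod_cast Finset.card_lt_card hss

lemma swapA_apply_left (σ : AgT k ≃ TV k) (i j : AgT k) : swapA σ i j i = σ j := by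
  simp [swapA]

lemma swapA_apply_right (σ : AgT k ≃ TV k) (i j : AgT k) : swapA σ i j j = σ i := by
  simp [swapA]

lemma swapA_symm_apply (σ : AgT k ≃ TV k) (i j : AgT k) (w : TV k)
    (hwi : w ≠ σ i) (hwj : w ≠ σ j) :
    (swapA σ i j).symm w = σ.symm w := by
  have : (swapA σ i j).symm w = Equiv.swap i j (σ.symm w) := rfl
  rw [this]
  apply Equiv.swap_apply_of_ne_of_ne
  · intro h; exact hwi (by rw [← σ.apply_symm_apply w, h])
  · intro h; exact hwj (by rw [← σ.apply_symm_apply w, h])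

variable {k : ℕ}

lemma swapRoot (σ : AgT k ≃ TV k) (i j : AgT k) (b b1 : Fin (k*(k-1)-1)) (x : Fin k)
    (hi : σ i = TV.leaf b x) (hj : σ j = TV.root)
    (hty : i.1 ≠ j.1)
    (hpar : (σ.symm (TV.mid b)).1 = j.1)
    (hb1 : (σ.symm (TV.mid b1)).1 = i.1) :
    improving (GT k) Prod.fst σ i j := by
  set σ' := swapA σ i j with hσ'
  have hσ'i : σ' i = TV.root := by rw [hσ', swapA_apply_left, hj]
  have hσ'j : σ' j = TV.leaf b x := by rw [hσ', swapA_apply_right, hi]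
  have hmi : ∀ b2 : Fin (k*(k-1)-1), (TV.mid b2 : TV k) ≠ σ i := by
    rw [hi]; intro b2 h; cases h
  have hmj : ∀ b2 : Fin (k*(k-1)-1), (TV.mid b2 : TV k) ≠ σ j := by
    rw [hj]; intro b2 h; cases h
  have hsymm : ∀ b2, (σ'.symm (TV.mid b2)) = σ.symm (TV.mid b2) := fun b2 =>
    swapA_symm_apply σ i j _ (hmi b2) (hmj b2)
  constructor
  · have h0 : util (GT k) Prod.fst σ i = 0 := by
      rw [util_leaf σ i b x hi, if_neg]
      intro h; exact hty (h ▸ hpar ▸ rfl)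
    rw [h0]
    refine util_pos σ' i (TV.mid b1) ?_ ?_
    · rw [hσ'i, nbhd_root]; exact Finset.mem_image.2 ⟨b1, Finset.mem_univ _, rfl⟩
    · rw [hsymm b1]; exact hb1
  · have h1 : util (GT k) Prod.fst σ' j = 1 := by
      rw [util_leaf σ' j b x hσ'j, if_pos]
      rw [hsymm b]; exact hpar
    rw [h1]
    refine util_lt_one σ j (TV.mid b1) ?_ ?_
    · rw [hj, nbhd_root]; exact Finset.mem_image.2 ⟨b1, Finset.mem_univ _, rfl⟩
    · rw [hb1]; exact hty

lemma swapMid (σ : AgT k ≃ TV k) (i j : AgT k) (b' b'' : Fin (k*(k-1)-1)) (x : Fin k)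
    (w : TV k)
    (hi : σ i = TV.leaf b' x) (hj : σ j = TV.mid b'')
    (hbb : b'' ≠ b')
    (hty : i.1 ≠ j.1)
    (hpar : (σ.symm (TV.mid b')).1 = j.1)
    (hw : w ∈ (GT k).neighborFinset (TV.mid b''))
    (hwt : (σ.symm w).1 = i.1) :
    improving (GT k) Prod.fst σ i j := by
  set σ' := swapA σ i j with hσ'
  have hσ'i : σ' i = TV.mid b'' := by rw [hσ', swapA_apply_left, hj]
  have hσ'j : σ' j = TV.leaf b' x := by rw [hσ', swapA_apply_right, hi]
  have hwd : w = TV.root ∨ ∃ y, w = TV.leaf b'' y := by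
    have := (SimpleGraph.mem_neighborFinset _ _ _).1 hw
    exact (adj_mid_iff b'' w).1 this
  have hwi : w ≠ σ i := by
    rw [hi]
    rcases hwd with rfl | ⟨y, rfl⟩
    · intro h; cases h
    · intro h; injection h with h1 h2; exact hbb h1
  have hwj : w ≠ σ j := by
    rw [hj]
    rcases hwd with rfl | ⟨y, rfl⟩
    · intro h; cases h
    · intro h; cases h
  have hsw : σ'.symm w = σ.symm w := swapA_symm_apply σ i j w hwi hwj
  have hsb' : σ'.symm (TV.mid b') = σ.symm (TV.mid b') := by
    refine swapA_symm_apply σ i j _ ?_ ?_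
    · rw [hi]; intro h; cases h
    · rw [hj]; intro h; injection h with h1; exact hbb h1.symm
  constructor
  · have h0 : util (GT k) Prod.fst σ i = 0 := by
      rw [util_leaf σ i b' x hi, if_neg]
      intro h; exact hty (h ▸ hpar ▸ rfl)
    rw [h0]
    refine util_pos σ' i w ?_ ?_
    · rw [hσ'i]; exact hw
    · rw [hsw]; exact hwt
  · have h1 : util (GT k) Prod.fst σ' j = 1 := by
      rw [util_leaf σ' j b' x hσ'j, if_pos]
      rw [hsb']; exact hpar
    rw [h1]
    refine util_lt_one σ j w ?_ ?_
    · rw [hj]; exact hw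
    · rw [hwt]; exact hty

variable {k : ℕ}

lemma card_fiber (σ : AgT k ≃ TV k) (t : Fin k) :
    (univ.filter fun v : TV k => (σ.symm v).1 = t).card = k^2 - 2 := by
  have h1 : univ.filter (fun v : TV k => (σ.symm v).1 = t)
      = (univ.filter fun a : AgT k => a.1 = t).map ⟨σ, σ.injective⟩ := by
    ext v
    simp only [Finset.mem_map, Finset.mem_filter, Finset.mem_univ, true_and,
      Function.Embedding.coeFn_mk]
    constructor
    · intro h; exact ⟨σ.symm v, h, σ.apply_symm_apply v⟩
    · rintro ⟨a, ha, rfl⟩; simpa using ha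
  have h2 : (univ.filter fun a : AgT k => a.1 = t)
      = (univ : Finset (Fin (k^2-2))).image (fun y => (t, y)) := by
    ext a
    simp only [Finset.mem_filter, Finset.mem_univ, true_and, Finset.mem_image]
    constructor
    · intro ha; exact ⟨a.2, by rw [← ha]⟩
    · rintro ⟨y, rfl⟩; rfl
  rw [h1, Finset.card_map, h2,
    Finset.card_image_of_injective _ (fun y z h => by injection h), Finset.card_univ,
    Fintype.card_fin]


/-- Lemma 2 of the paper: in the `k`-swap game (`k ≥ 3`) with `k² − 2`
strategic agents per type on the three-layer tree, no assignment in which every one of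
the `k` types has an agent occupying a middle node (a node of `B`) is an equilibrium. -/
theorem not_equilibrium_of_all_types_on_mid (k : ℕ) (hk : 3 ≤ k) (σ : AgT k ≃ TV k)
    (hall : ∀ t : Fin k, ∃ b : Fin (k*(k-1)-1), (σ.symm (TV.mid b)).1 = t) :
    ¬ isEquilibrium (GT k) Prod.fst σ := by
  intro heq
  have himp : ∀ i j : AgT k, ¬ improving (GT k) Prod.fst σ i j := fun i j h => heq ⟨i, j, h⟩
  set t0 : Fin k := (σ.symm TV.root).1 with ht0
  -- C4: every leaf below a t0-mid is of type t0
  have F1 : ∀ (b : Fin (k*(k-1)-1)) (y : Fin k),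
      (σ.symm (TV.mid b)).1 = t0 → (σ.symm (TV.leaf b y)).1 = t0 := by
    intro b y hb
    by_contra hne
    obtain ⟨b1, hb1⟩ := hall (σ.symm (TV.leaf b y)).1
    exact himp _ _ (swapRoot σ (σ.symm (TV.leaf b y)) (σ.symm TV.root) b b1 y
      (σ.apply_symm_apply _) (σ.apply_symm_apply _) hne hb hb1)
  -- there is a misplaced t0-leaf
  have F2 : ∃ (b' : Fin (k*(k-1)-1)) (x : Fin k),
      (σ.symm (TV.leaf b' x)).1 = t0 ∧ (σ.symm (TV.mid b')).1 ≠ t0 := by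
    by_contra hno
    push_neg at hno
    set Bt0 : Finset (Fin (k*(k-1)-1)) :=
      univ.filter (fun b => (σ.symm (TV.mid b)).1 = t0) with hBt0
    set S : Finset (TV k) :=
      ({TV.root} ∪ Bt0.image TV.mid) ∪
        (Bt0 ×ˢ (univ : Finset (Fin k))).image (fun p => TV.leaf p.1 p.2) with hSdef
    have hS : S = univ.filter (fun v : TV k => (σ.symm v).1 = t0) := by
      ext v
      simp only [hSdef, Finset.mem_union, Finset.mem_singleton, Finset.mem_image,
        Finset.mem_product, Finset.mem_filter, Finset.mem_univ, true_and, hBt0]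
      cases v with
      | root => simp [← ht0]
      | mid b =>
        constructor
        · rintro ((h | ⟨a, ha, h⟩) | ⟨p, hp, h⟩)
          · cases h
          · injection h with h1; exact h1 ▸ ha
          · cases h
        · intro h; exact Or.inl (Or.inr ⟨b, h, rfl⟩)
      | leaf b y =>
        constructor
        · rintro ((h | ⟨a, ha, h⟩) | ⟨p, hp, h⟩)
          · cases h
          · cases h
          · injection h with h1 h2; exact F1 b y (h1 ▸ hp.1)
        · intro h; exact Or.inr ⟨(b, y), ⟨hno b y h, trivial⟩, rfl⟩
    have hdisj1 : Disjoint ({TV.root} : Finset (TV k)) (Bt0.image TV.mid) := by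
      rw [Finset.disjoint_left]
      rintro v hv hv2
      rw [Finset.mem_singleton] at hv
      obtain ⟨a, _, h⟩ := Finset.mem_image.1 hv2
      subst hv; cases h
    have hdisj2 : Disjoint (({TV.root} : Finset (TV k)) ∪ Bt0.image TV.mid)
        ((Bt0 ×ˢ (univ : Finset (Fin k))).image (fun p => TV.leaf p.1 p.2)) := by
      rw [Finset.disjoint_left]
      rintro v hv hv2
      obtain ⟨p, _, h⟩ := Finset.mem_image.1 hv2
      rcases Finset.mem_union.1 hv with hv1 | hv1
      · rw [Finset.mem_singleton] at hv1; subst hv1; cases h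
      · obtain ⟨a, _, h2⟩ := Finset.mem_image.1 hv1; rw [← h2] at h; cases h
    have hcardS : S.card = 1 + Bt0.card + Bt0.card * k := by
      rw [hSdef, Finset.card_union_of_disjoint hdisj2, Finset.card_union_of_disjoint hdisj1,
        Finset.card_singleton,
        Finset.card_image_of_injective _ (fun a b h => by injection h),
        Finset.card_image_of_injective _
          (fun p q h => by
            injection h with h1 h2
            exact Prod.ext h1 h2),
        Finset.card_product, Finset.card_univ, Fintype.card_fin]
    have hfin : 1 + Bt0.card + Bt0.card * k = k^2 - 2 := by
      rw [← hcardS, hS, card_fiber]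
    obtain ⟨d, rfl⟩ : ∃ d, k = d + 3 := ⟨k - 3, by omega⟩
    set M := Bt0.card
    have e1 : (d+3)^2 = d*d + 6*d + 9 := by ring
    have e2 : M*(d+3) + M = M*(d+4) := by ring
    have e4 : (d+4)*M = M*(d+4) := by ring
    have hdvd1 : (d+4) ∣ (d*d+6*d+6) := ⟨M, by omega⟩
    have hdvd2 : (d+4) ∣ (d*d+6*d+8) := ⟨d+2, by ring⟩
    have h2 : (d+4) ∣ 2 := by
      have hsub : d*d+6*d+8 - (d*d+6*d+6) = 2 := by omega
      exact hsub ▸ Nat.dvd_sub hdvd2 hdvd1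
    have := Nat.le_of_dvd (by norm_num) h2
    omega
  obtain ⟨b', x, hbx, hbs⟩ := F2
  set s : Fin k := (σ.symm (TV.mid b')).1 with hsdef
  have hst0 : s ≠ t0 := hbs
  -- only b' is an s-mid
  have F3 : ∀ b'' : Fin (k*(k-1)-1), b'' ≠ b' → (σ.symm (TV.mid b'')).1 ≠ s := by
    intro b'' hne hs2
    refine himp _ _ (swapMid σ (σ.symm (TV.leaf b' x)) (σ.symm (TV.mid b'')) b' b'' x TV.root
      (σ.apply_symm_apply _) (σ.apply_symm_apply _) hne ?_ ?_ ?_ ?_)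
    · rw [hbx, hs2]; exact fun h => hbs (hsdef ▸ h.symm)
    · rw [hs2]
    · rw [nbhd_mid]; exact Finset.mem_insert_self _ _
    · rw [hbx]
  -- type-s leaves below distinct equal-typed non-b' mids are impossible
  have F4 : ∀ (b1 b2 : Fin (k*(k-1)-1)) (x1 x2 : Fin k), b1 ≠ b' → b2 ≠ b' → b1 ≠ b2 →
      (σ.symm (TV.mid b1)).1 = (σ.symm (TV.mid b2)).1 →
      (σ.symm (TV.leaf b1 x1)).1 = s → (σ.symm (TV.leaf b2 x2)).1 = s → False := by
    intro b1 b2 x1 x2 hb1 hb2 hne12 heq12 hx1 hx2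
    refine himp _ _ (swapMid σ (σ.symm (TV.leaf b1 x1)) (σ.symm (TV.mid b2)) b1 b2 x1
      (TV.leaf b2 x2) (σ.apply_symm_apply _) (σ.apply_symm_apply _) hne12.symm ?_ ?_ ?_ ?_)
    · exact fun h => F3 b2 hb2 (h.symm.trans hx1)
    · exact heq12
    · rw [nbhd_mid]
      exact Finset.mem_insert_of_mem (Finset.mem_image.2 ⟨x2, Finset.mem_univ _, rfl⟩)
    · exact hx2.trans hx1.symm
  -- host mids other than b'
  set H : Finset (Fin (k*(k-1)-1)) :=
    univ.filter (fun b => b ≠ b' ∧ ∃ y, (σ.symm (TV.leaf b y)).1 = s) with hHdef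
  have hHcard : H.card ≤ k - 2 := by
    have htgt : ((univ : Finset (Fin k)) \ {s, t0}).card = k - 2 := by
      rw [Finset.card_sdiff_of_subset (Finset.subset_univ _), Finset.card_univ, Fintype.card_fin,
        Finset.card_insert_of_notMem (by simp [hbs]), Finset.card_singleton]
    rw [← htgt]
    apply Finset.card_le_card_of_injOn (fun b => (σ.symm (TV.mid b)).1)
    · intro b hb
      rw [hHdef, Finset.mem_coe, Finset.mem_filter] at hb
      obtain ⟨_, hbne, y, hy⟩ := hb
      rw [Finset.mem_coe, Finset.mem_sdiff]
      refine ⟨Finset.mem_univ _, ?_⟩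
      simp only [Finset.mem_insert, Finset.mem_singleton]
      push_neg
      refine ⟨F3 b hbne, ?_⟩
      intro hbt0
      exact hst0 (hy.symm.trans (F1 b y hbt0))
    · intro b1 hb1 b2 hb2 hfeq
      by_contra hne
      rw [Finset.mem_coe, hHdef, Finset.mem_filter] at hb1 hb2
      obtain ⟨_, hb1ne, y1, hy1⟩ := hb1
      obtain ⟨_, hb2ne, y2, hy2⟩ := hb2
      exact F4 b1 b2 y1 y2 hb1ne hb2ne hne hfeq hy1 hy2
  set Cover : Finset (TV k) :=
    insert (TV.mid b') (((univ.image (TV.leaf b')).erase (TV.leaf b' x)) ∪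
      H.biUnion (fun b => univ.image (TV.leaf b))) with hCdef
  have hsub : univ.filter (fun v : TV k => (σ.symm v).1 = s) ⊆ Cover := by
    intro v hv
    have hvs := (Finset.mem_filter.1 hv).2
    rw [hCdef]
    cases v with
    | root => exact absurd hvs (fun h => hst0 (h.symm.trans ht0.symm))
    | mid b =>
      by_cases hb : b = b'
      · subst hb; exact Finset.mem_insert_self _ _
      · exact absurd hvs (F3 b hb)
    | leaf b y =>
      refine Finset.mem_insert_of_mem ?_
      by_cases hb : b = b'
      · subst hb
        refine Finset.mem_union_left _ (Finset.mem_erase.2 ⟨?_, ?_⟩)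
        · intro h
          injection h with h1 h2
          subst h2
          exact hst0 (hvs.symm.trans hbx)
        · exact Finset.mem_image.2 ⟨y, Finset.mem_univ _, rfl⟩
      · refine Finset.mem_union_right _ (Finset.mem_biUnion.2 ⟨b, ?_, ?_⟩)
        · rw [hHdef, Finset.mem_filter]; exact ⟨Finset.mem_univ _, hb, y, hvs⟩
        · exact Finset.mem_image.2 ⟨y, Finset.mem_univ _, rfl⟩
  have hA : ((univ.image (TV.leaf b')).erase (TV.leaf b' x)).card = k-1 := by
    rw [Finset.card_erase_of_mem (Finset.mem_image.2 ⟨x, Finset.mem_univ _, rfl⟩),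
      Finset.card_image_of_injective _ (fun a b h => by injection h), Finset.card_univ,
      Fintype.card_fin]
  have hB : (H.biUnion fun b => univ.image (TV.leaf b)).card ≤ (k-2)*k := by
    refine (Finset.card_biUnion_le).trans ?_
    refine (Finset.sum_le_card_nsmul H _ k ?_).trans ?_
    · intro b _
      rw [Finset.card_image_of_injective _ (fun a c h => by injection h), Finset.card_univ,
        Fintype.card_fin]
    · simp only [smul_eq_mul]
      exact Nat.mul_le_mul_right k hHcard
  have hcardCover : Cover.card ≤ (k-1) + (k-2)*k + 1 := by
    rw [hCdef]
    exact (Finset.card_insert_le _ _).trans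
      (Nat.add_le_add_right ((Finset.card_union_le _ _).trans
        (Nat.add_le_add (le_of_eq hA) hB)) 1)
  have hfin : k^2 - 2 ≤ (k-1) + (k-2)*k + 1 := by
    rw [← card_fiber σ s]
    exact (Finset.card_le_card hsub).trans hcardCover
  have e1 : (k-2)*k + 2*k = k*k := by
    have h2 : k - 2 + 2 = k := by omega
    calc (k-2)*k + 2*k = ((k-2)+2)*k := by ring
      _ = k*k := by rw [h2]
  have e2 : k^2 = k*k := by ring
  omega

end SwapGame
end

section
/- Consider a k-swap game whose topology is a connected δ-regular graph, and define Φ̄(v) = Σ_{i} |N_i(v) ∩ F_i|, the total number of (ordered) agent–friend adjacencies under assignment v. If agents i and j are of different types and both strictly increase their utility by swapping positions (i.e., u_i(v^{i↔j}) > u_i(v) and u_j(v^{i↔j}) > u_j(v)), then Φ̄(v^{i↔j}) > Φ̄(v). Moreover, on a δ-regular topology SW(v) = Φ̄(v)/δ for every assignment v. -/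
open Finset

namespace SwapGame

/-- The potential `Φ̄(v) = Σ_i |N_i(v) ∩ F_i|`: the total number of agent–friend
adjacencies under assignment `v`. -/
def potBar {A V K : Type*} [Fintype A] [Fintype V] [DecidableEq A] [DecidableEq V]
    [DecidableEq K] (G : SimpleGraph V) [DecidableRel G.Adj] (c : A → K)
    (σ : A ≃ V) : ℕ :=
  ∑ i : A, ((G.neighborFinset (σ i)).filter (fun w => c (σ.symm w) = c i)).card

section Aux

set_option linter.unusedSectionVars false

variable {A V K : Type} [Fintype A] [DecidableEq A] [Fintype V] [DecidableEq V] [DecidableEq K]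

lemma card_filter_eq_sum (G : SimpleGraph V) [DecidableRel G.Adj] (v : V) (p : V → Prop)
    [DecidablePred p] :
    (((G.neighborFinset v).filter p).card : ℤ)
      = ∑ w : V, (if G.Adj v w ∧ p w then (1:ℤ) else 0) := by
  rw [SimpleGraph.neighborFinset_eq_filter, Finset.filter_filter, Finset.card_filter]
  push_cast
  rfl

lemma potBar_eq_double (G : SimpleGraph V) [DecidableRel G.Adj] (c : A → K)
    (σ : A ≃ V) :
    (potBar G c σ : ℤ) = ∑ u : V, ∑ w : V,
      (if G.Adj u w ∧ c (σ.symm w) = c (σ.symm u) then (1:ℤ) else 0) := by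
  unfold potBar
  push_cast
  rw [← Equiv.sum_comp σ (fun u => ∑ w : V,
      (if G.Adj u w ∧ c (σ.symm w) = c (σ.symm u) then (1:ℤ) else 0))]
  refine Finset.sum_congr rfl fun i _ => ?_
  rw [card_filter_eq_sum]
  simp [Equiv.symm_apply_apply]

lemma double_split {V : Type} [Fintype V] [DecidableEq V] (x y : V) (hxy : x ≠ y)
    (f : V → V → ℤ) :
    ∑ u : V, ∑ w : V, f u w
      = ∑ u ∈ univ \ {x, y}, ∑ w ∈ univ \ {x, y}, f u w
        + (∑ u ∈ univ \ {x, y}, (f u x + f u y))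
        + (∑ w ∈ univ \ {x, y}, (f x w + f y w))
        + (f x x + f x y + f y x + f y y) := by
  have split : ∀ g : V → ℤ, ∑ u : V, g u = ∑ u ∈ univ \ {x, y}, g u + (g x + g y) := by
    intro g
    rw [← Finset.sum_sdiff (Finset.subset_univ ({x, y} : Finset V)), Finset.sum_pair hxy]
  rw [split (fun u => ∑ w : V, f u w)]
  simp only [split]
  simp only [Finset.sum_add_distrib]
  ring

end Aux

/-- in a `k`-swap game on a connected `δ`-regular topology, `Φ̄` is a
potential maximization function: if agents `i` and `j` of different types both strictly
increase their utility by swapping, then `Φ̄` strictly increases; moreover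
`SW(v) = Φ̄(v)/δ` for every assignment `v`. -/
theorem potential_regular {A V : Type} [Fintype A] [DecidableEq A]
    [Fintype V] [DecidableEq V] (G : SimpleGraph V) [DecidableRel G.Adj]
    (hconn : G.Connected) (δ k : ℕ) (hreg : G.IsRegularOfDegree δ)
    (c : A → Fin k) (hne : ∀ t : Fin k, ∃ i, c i = t) :
    (∀ (σ : A ≃ V) (i j : A), c i ≠ c j → improving G c σ i j →
        potBar G c σ < potBar G c (swapA σ i j)) ∧
    (∀ σ : A ≃ V, SW G c σ = (potBar G c σ : ℚ) / (δ : ℚ)) := by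
  have hdeg : ∀ v : V, ((G.neighborFinset v).card : ℚ) = (δ : ℚ) := by
    intro v; rw [SimpleGraph.card_neighborFinset_eq_degree, hreg v]
  constructor
  · intro σ i j hc himp
    set σ' : A ≃ V := swapA σ i j with hσ'
    have hij : i ≠ j := fun h => hc (by rw [h])
    set x : V := σ i with hx
    set y : V := σ j with hy
    have hxy : x ≠ y := fun h => hij (σ.injective h)
    have hσ'i : σ' i = y := by simp [hσ', swapA, Equiv.swap_apply_left, hy]
    have hσ'j : σ' j = x := by simp [hσ', swapA, Equiv.swap_apply_right, hx]
    have hsymx : σ.symm x = i := σ.symm_apply_apply i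
    have hsymy : σ.symm y = j := σ.symm_apply_apply j
    have hσ'symm : ∀ w : V, σ'.symm w = Equiv.swap i j (σ.symm w) := by
      intro w; simp [hσ', swapA]
    set τ : V → Fin k := fun w => c (σ.symm w) with hτdef
    have hτx : τ x = c i := by simp [hτdef, hsymx]
    have hτy : τ y = c j := by simp [hτdef, hsymy]
    have hswapcomm : ∀ a : A, Equiv.swap x y (σ a) = σ (Equiv.swap i j a) := by
      intro a
      by_cases h1 : a = i
      · subst h1; simp [hx, hy, Equiv.swap_apply_left]
      · by_cases h2 : a = j
        · subst h2; simp [hx, hy, Equiv.swap_apply_right]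
        · rw [Equiv.swap_apply_of_ne_of_ne (fun h => h1 (σ.injective (by rw [h, hx])))
            (fun h => h2 (σ.injective (by rw [h, hy]))),
            Equiv.swap_apply_of_ne_of_ne h1 h2]
    have hτ' : ∀ w : V, c (σ'.symm w) = τ (Equiv.swap x y w) := by
      intro w
      have h2 : Equiv.swap x y w = σ (Equiv.swap i j (σ.symm w)) := by
        conv_lhs => rw [← σ.apply_symm_apply w]
        exact hswapcomm _
      rw [hσ'symm, hτdef]
      simp only [h2, Equiv.symm_apply_apply]
    -- δ positive
    have hδ : 0 < δ := by
      by_contra h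
      push_neg at h
      interval_cases δ
      have h1 := himp.1
      unfold util at h1
      rw [hdeg, hdeg] at h1
      norm_num at h1
    have hδQ : (0:ℚ) < (δ : ℚ) := by exact_mod_cast hδ
    -- the four counts
    set s : Finset V := univ \ {x, y} with hs
    set P1 : ℤ := ∑ w ∈ s, (if G.Adj x w ∧ τ w = τ x then (1:ℤ) else 0) with hP1
    set Q1 : ℤ := ∑ w ∈ s, (if G.Adj x w ∧ τ w = τ y then (1:ℤ) else 0) with hQ1
    set P2 : ℤ := ∑ w ∈ s, (if G.Adj y w ∧ τ w = τ x then (1:ℤ) else 0) with hP2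
    set Q2 : ℤ := ∑ w ∈ s, (if G.Adj y w ∧ τ w = τ y then (1:ℤ) else 0) with hQ2
    have smem : ∀ w : V, w ∈ s ↔ w ≠ x ∧ w ≠ y := by
      intro w; simp [hs]
    -- counts as filter cards
    have cA1 : (((G.neighborFinset x).filter (fun w => c (σ.symm w) = c i)).card : ℤ)
        = P1 := by
      rw [hP1, Finset.sum_boole, Nat.cast_inj]
      congr 1
      ext w
      simp only [Finset.mem_filter, SimpleGraph.mem_neighborFinset, smem]
      constructor
      · rintro ⟨hadj, hcw⟩
        refine ⟨⟨G.ne_of_adj (hadj.symm), ?_⟩, hadj, by rw [hτx]; exact hcw⟩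
        rintro rfl
        rw [hsymy] at hcw; exact hc hcw.symm
      · rintro ⟨-, hadj, hcw⟩; exact ⟨hadj, by rw [hτx] at hcw; exact hcw⟩
    have cB2 : (((G.neighborFinset y).filter (fun w => c (σ.symm w) = c j)).card : ℤ)
        = Q2 := by
      rw [hQ2, Finset.sum_boole, Nat.cast_inj]
      congr 1
      ext w
      simp only [Finset.mem_filter, SimpleGraph.mem_neighborFinset, smem]
      constructor
      · rintro ⟨hadj, hcw⟩
        refine ⟨⟨?_, G.ne_of_adj (hadj.symm)⟩, hadj, by rw [hτy]; exact hcw⟩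
        rintro rfl
        rw [hsymx] at hcw; exact hc hcw
      · rintro ⟨-, hadj, hcw⟩; exact ⟨hadj, by rw [hτy] at hcw; exact hcw⟩
    have cA2 : (((G.neighborFinset y).filter (fun w => c (σ'.symm w) = c i)).card : ℤ)
        = P2 := by
      rw [hP2, Finset.sum_boole, Nat.cast_inj]
      congr 1
      ext w
      simp only [Finset.mem_filter, SimpleGraph.mem_neighborFinset, smem, hτ']
      constructor
      · rintro ⟨hadj, hcw⟩
        have hwy : w ≠ y := G.ne_of_adj (hadj.symm)
        have hwx : w ≠ x := by
          rintro rfl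
          rw [Equiv.swap_apply_left, hτy] at hcw
          exact hc hcw.symm
        rw [Equiv.swap_apply_of_ne_of_ne hwx hwy] at hcw
        exact ⟨⟨hwx, hwy⟩, hadj, by rw [hτx]; exact hcw⟩
      · rintro ⟨⟨hwx, hwy⟩, hadj, hcw⟩
        rw [Equiv.swap_apply_of_ne_of_ne hwx hwy]
        exact ⟨hadj, by rw [hτx] at hcw; exact hcw⟩
    have cB1 : (((G.neighborFinset x).filter (fun w => c (σ'.symm w) = c j)).card : ℤ)
        = Q1 := by
      rw [hQ1, Finset.sum_boole, Nat.cast_inj]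
      congr 1
      ext w
      simp only [Finset.mem_filter, SimpleGraph.mem_neighborFinset, smem, hτ']
      constructor
      · rintro ⟨hadj, hcw⟩
        have hwx : w ≠ x := G.ne_of_adj (hadj.symm)
        have hwy : w ≠ y := by
          rintro rfl
          rw [Equiv.swap_apply_right, hτx] at hcw
          exact hc hcw
        rw [Equiv.swap_apply_of_ne_of_ne hwx hwy] at hcw
        exact ⟨⟨hwx, hwy⟩, hadj, by rw [hτy]; exact hcw⟩
      · rintro ⟨⟨hwx, hwy⟩, hadj, hcw⟩
        rw [Equiv.swap_apply_of_ne_of_ne hwx hwy]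
        exact ⟨hadj, by rw [hτy] at hcw; exact hcw⟩
    -- inequalities from improving
    have hstep : ∀ (a b : ℕ), (a : ℚ) / δ < (b : ℚ) / δ → (a : ℤ) < (b : ℤ) := by
      intro a b h
      have h2 : (a : ℚ) < (b : ℚ) := by
        have := mul_lt_mul_of_pos_right h hδQ
        rwa [div_mul_cancel₀ _ (ne_of_gt hδQ), div_mul_cancel₀ _ (ne_of_gt hδQ)] at this
      exact_mod_cast h2
    have hP : P1 < P2 := by
      have h1 := himp.1
      rw [← hσ'] at h1
      unfold util at h1
      rw [hσ'i, ← hx, hdeg, hdeg] at h1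
      have := hstep _ _ h1
      rwa [cA1, cA2] at this
    have hQ : Q2 < Q1 := by
      have h1 := himp.2
      rw [← hσ'] at h1
      unfold util at h1
      rw [hσ'j, ← hy, hdeg, hdeg] at h1
      have := hstep _ _ h1
      rwa [cB2, cB1] at this
    -- potential identities
    have hpot1 : (potBar G c σ : ℤ)
        = (∑ u ∈ s, ∑ w ∈ s, (if G.Adj u w ∧ τ w = τ u then (1:ℤ) else 0))
          + 2 * P1 + 2 * Q2 := by
      rw [potBar_eq_double, double_split x y hxy]
      have e1 : (∑ u ∈ univ \ {x, y},
          ((if G.Adj u x ∧ c (σ.symm x) = c (σ.symm u) then (1:ℤ) else 0)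
            + (if G.Adj u y ∧ c (σ.symm y) = c (σ.symm u) then (1:ℤ) else 0)))
          = P1 + Q2 := by
        rw [Finset.sum_add_distrib, hP1, hQ2, ← hs]
        congr 1
        · exact Finset.sum_congr rfl fun u _ =>
            if_congr (and_congr (G.adj_comm u x) eq_comm) rfl rfl
        · exact Finset.sum_congr rfl fun u _ =>
            if_congr (and_congr (G.adj_comm u y) eq_comm) rfl rfl
      have e2 : (∑ w ∈ univ \ {x, y},
          ((if G.Adj x w ∧ c (σ.symm w) = c (σ.symm x) then (1:ℤ) else 0)
            + (if G.Adj y w ∧ c (σ.symm w) = c (σ.symm y) then (1:ℤ) else 0)))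
          = P1 + Q2 := by
        rw [Finset.sum_add_distrib, hP1, hQ2, ← hs]
      have c1 : (if G.Adj x x ∧ c (σ.symm x) = c (σ.symm x) then (1:ℤ) else 0) = 0 :=
        if_neg (by simp [G.irrefl])
      have c2 : (if G.Adj x y ∧ c (σ.symm y) = c (σ.symm x) then (1:ℤ) else 0) = 0 :=
        if_neg (by rw [hsymx, hsymy]; rintro ⟨-, h⟩; exact hc h.symm)
      have c3 : (if G.Adj y x ∧ c (σ.symm x) = c (σ.symm y) then (1:ℤ) else 0) = 0 :=
        if_neg (by rw [hsymx, hsymy]; rintro ⟨-, h⟩; exact hc h)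
      have c4 : (if G.Adj y y ∧ c (σ.symm y) = c (σ.symm y) then (1:ℤ) else 0) = 0 :=
        if_neg (by simp [G.irrefl])
      rw [e1, e2, c1, c2, c3, c4, ← hs]
      ring
    have hpot2 : (potBar G c σ' : ℤ)
        = (∑ u ∈ s, ∑ w ∈ s, (if G.Adj u w ∧ τ w = τ u then (1:ℤ) else 0))
          + 2 * Q1 + 2 * P2 := by
      rw [potBar_eq_double]
      simp only [hτ']
      rw [double_split x y hxy]
      have e0 : (∑ u ∈ univ \ {x, y}, ∑ w ∈ univ \ {x, y},
          (if G.Adj u w ∧ τ (Equiv.swap x y w) = τ (Equiv.swap x y u) then (1:ℤ) else 0))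
          = ∑ u ∈ s, ∑ w ∈ s, (if G.Adj u w ∧ τ w = τ u then (1:ℤ) else 0) := by
        rw [← hs]
        refine Finset.sum_congr rfl fun u hu => Finset.sum_congr rfl fun w hw => ?_
        obtain ⟨hux, huy⟩ := (smem u).mp hu
        obtain ⟨hwx, hwy⟩ := (smem w).mp hw
        rw [Equiv.swap_apply_of_ne_of_ne hux huy, Equiv.swap_apply_of_ne_of_ne hwx hwy]
      have e1 : (∑ u ∈ univ \ {x, y},
          ((if G.Adj u x ∧ τ (Equiv.swap x y x) = τ (Equiv.swap x y u) then (1:ℤ) else 0)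
            + (if G.Adj u y ∧ τ (Equiv.swap x y y) = τ (Equiv.swap x y u) then (1:ℤ) else 0)))
          = Q1 + P2 := by
        rw [Finset.sum_add_distrib, hQ1, hP2, ← hs]
        congr 1
        · refine Finset.sum_congr rfl fun u hu => ?_
          obtain ⟨hux, huy⟩ := (smem u).mp hu
          rw [Equiv.swap_apply_left, Equiv.swap_apply_of_ne_of_ne hux huy]
          exact if_congr (and_congr (G.adj_comm u x) eq_comm) rfl rfl
        · refine Finset.sum_congr rfl fun u hu => ?_
          obtain ⟨hux, huy⟩ := (smem u).mp hu
          rw [Equiv.swap_apply_right, Equiv.swap_apply_of_ne_of_ne hux huy]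
          exact if_congr (and_congr (G.adj_comm u y) eq_comm) rfl rfl
      have e2 : (∑ w ∈ univ \ {x, y},
          ((if G.Adj x w ∧ τ (Equiv.swap x y w) = τ (Equiv.swap x y x) then (1:ℤ) else 0)
            + (if G.Adj y w ∧ τ (Equiv.swap x y w) = τ (Equiv.swap x y y) then (1:ℤ) else 0)))
          = Q1 + P2 := by
        rw [Finset.sum_add_distrib, hQ1, hP2, ← hs]
        congr 1
        · refine Finset.sum_congr rfl fun w hw => ?_
          obtain ⟨hwx, hwy⟩ := (smem w).mp hw
          rw [Equiv.swap_apply_left, Equiv.swap_apply_of_ne_of_ne hwx hwy]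
        · refine Finset.sum_congr rfl fun w hw => ?_
          obtain ⟨hwx, hwy⟩ := (smem w).mp hw
          rw [Equiv.swap_apply_right, Equiv.swap_apply_of_ne_of_ne hwx hwy]
      have hττ : τ x ≠ τ y := by rw [hτx, hτy]; exact hc
      have c1 : (if G.Adj x x ∧ τ (Equiv.swap x y x) = τ (Equiv.swap x y x)
          then (1:ℤ) else 0) = 0 := if_neg (by simp [G.irrefl])
      have c2 : (if G.Adj x y ∧ τ (Equiv.swap x y y) = τ (Equiv.swap x y x)
          then (1:ℤ) else 0) = 0 := by
        rw [Equiv.swap_apply_left, Equiv.swap_apply_right]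
        exact if_neg (by rintro ⟨-, h⟩; exact hττ h)
      have c3 : (if G.Adj y x ∧ τ (Equiv.swap x y x) = τ (Equiv.swap x y y)
          then (1:ℤ) else 0) = 0 := by
        rw [Equiv.swap_apply_left, Equiv.swap_apply_right]
        exact if_neg (by rintro ⟨-, h⟩; exact hττ h.symm)
      have c4 : (if G.Adj y y ∧ τ (Equiv.swap x y y) = τ (Equiv.swap x y y)
          then (1:ℤ) else 0) = 0 := if_neg (by simp [G.irrefl])
      rw [e0, e1, e2, c1, c2, c3, c4]
      ring
    have : (potBar G c σ : ℤ) < (potBar G c σ' : ℤ) := by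
      rw [hpot1, hpot2]; linarith
    exact_mod_cast this
  · intro σ
    unfold SW util potBar
    push_cast
    rw [Finset.sum_div]
    refine Finset.sum_congr rfl fun i _ => ?_
    rw [hdeg]


end SwapGame
end

section
/- In every k-swap game with only strategic agents whose topology is a connected δ-regular graph, there exists an assignment that is simultaneously an equilibrium and maximizes the social welfare over all assignments. Hence the social price of stability of k-swap games on δ-regular topologies is 1. -/
open Finset

namespace SwapGame


section Aux
set_option linter.unusedSectionVars false

variable {A V : Type} [Fintype A] [DecidableEq A] [Fintype V] [DecidableEq V]

/-- count of neighbors of `v` whose `g`-color is `κ`, as a rational. -/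
private def Scnt (G : SimpleGraph V) [DecidableRel G.Adj]
    {k : ℕ} (g : V → Fin k) (v : V) (κ : Fin k) : ℚ :=
  ∑ w ∈ G.neighborFinset v, if g w = κ then 1 else 0

private lemma util_eq (G : SimpleGraph V) [DecidableRel G.Adj] {k δ : ℕ}
    (hreg : G.IsRegularOfDegree δ) (c : A → Fin k) (e : A ≃ V) (a : A) :
    util G c e a = Scnt G (fun v => c (e.symm v)) (e a) (c a) / δ := by
  unfold util Scnt
  rw [SimpleGraph.card_neighborFinset_eq_degree, hreg (e a), Finset.card_filter]
  congr 1
  push_cast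
  rfl

private lemma SW_eq (G : SimpleGraph V) [DecidableRel G.Adj] {k δ : ℕ}
    (hreg : G.IsRegularOfDegree δ) (c : A → Fin k) (e : A ≃ V) :
    SW G c e = (∑ v, Scnt G (fun v => c (e.symm v)) v (c (e.symm v))) / δ := by
  unfold SW
  rw [Finset.sum_div, ← Equiv.sum_comp e
    (fun v => Scnt G (fun w => c (e.symm w)) v (c (e.symm v)) / δ)]
  refine Finset.sum_congr rfl fun a _ => ?_
  simp only [Equiv.symm_apply_apply]
  exact util_eq G hreg c e a

private lemma key_sum (G : SimpleGraph V) [DecidableRel G.Adj] {k : ℕ}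
    (f f' : V → Fin k) (v₁ v₂ : V) (a₀ b : Fin k)
    (hv : v₁ ≠ v₂) (hab : a₀ ≠ b)
    (hf1 : f v₁ = a₀) (hf2 : f v₂ = b) (hf1' : f' v₁ = b) (hf2' : f' v₂ = a₀)
    (hff : ∀ v, v ≠ v₁ → v ≠ v₂ → f' v = f v) :
    ∑ v, Scnt G f' v (f' v) = ∑ v, Scnt G f v (f v)
      + 2 * ((Scnt G f' v₁ b - Scnt G f v₁ a₀) + (Scnt G f' v₂ a₀ - Scnt G f v₂ b)) := by
  have point : ∀ (κ : Fin k) (w : V),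
      ((if f' w = κ then (1:ℚ) else 0) - (if f w = κ then 1 else 0))
        = (if w = v₁ then ((if b = κ then (1:ℚ) else 0) - (if a₀ = κ then 1 else 0)) else 0)
          + (if w = v₂ then ((if a₀ = κ then (1:ℚ) else 0) - (if b = κ then 1 else 0)) else 0) := by
    intro κ w
    rcases eq_or_ne w v₁ with rfl | h1
    · simp [hf1', hf1, hv]
    rcases eq_or_ne w v₂ with rfl | h2
    · simp [hf2', hf2, h1]
    · simp [hff w h1 h2, h1, h2]
  have hdiff : ∀ v, v ≠ v₁ → v ≠ v₂ →
      Scnt G f' v (f' v) - Scnt G f v (f v)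
        = (if v ∈ G.neighborFinset v₁ then
            ((if b = f v then (1:ℚ) else 0) - (if a₀ = f v then 1 else 0)) else 0)
          + (if v ∈ G.neighborFinset v₂ then
            ((if a₀ = f v then (1:ℚ) else 0) - (if b = f v then 1 else 0)) else 0) := by
    intro v h1 h2
    rw [hff v h1 h2]
    unfold Scnt
    rw [← Finset.sum_sub_distrib]
    rw [Finset.sum_congr rfl (fun w _ => point (f v) w)]
    rw [Finset.sum_add_distrib, Finset.sum_ite_eq', Finset.sum_ite_eq']
    have m1 : (v₁ ∈ G.neighborFinset v) = (v ∈ G.neighborFinset v₁) := by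
      simp only [SimpleGraph.mem_neighborFinset]
      exact propext (G.adj_comm v v₁)
    have m2 : (v₂ ∈ G.neighborFinset v) = (v ∈ G.neighborFinset v₂) := by
      simp only [SimpleGraph.mem_neighborFinset]
      exact propext (G.adj_comm v v₂)
    simp only [m1, m2]
  have hI1 : ((univ.erase v₁).erase v₂) ∩ G.neighborFinset v₁
      = (G.neighborFinset v₁).erase v₂ := by
    ext w
    simp only [Finset.mem_inter, Finset.mem_erase, Finset.mem_univ, and_true,
      SimpleGraph.mem_neighborFinset]
    constructor
    · rintro ⟨⟨hw2, hw1⟩, ha⟩; exact ⟨hw2, ha⟩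
    · rintro ⟨hw2, ha⟩; exact ⟨⟨hw2, ha.ne'⟩, ha⟩
  have hI2 : ((univ.erase v₁).erase v₂) ∩ G.neighborFinset v₂
      = (G.neighborFinset v₂).erase v₁ := by
    ext w
    simp only [Finset.mem_inter, Finset.mem_erase, Finset.mem_univ, and_true,
      SimpleGraph.mem_neighborFinset]
    constructor
    · rintro ⟨⟨hw2, hw1⟩, ha⟩; exact ⟨hw1, ha⟩
    · rintro ⟨hw1, ha⟩; exact ⟨⟨ha.ne', hw1⟩, ha⟩
  have hq1 : Scnt G f' v₁ b = ∑ w ∈ (G.neighborFinset v₁).erase v₂,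
      if b = f w then (1:ℚ) else 0 := by
    unfold Scnt
    rw [← Finset.sum_erase (G.neighborFinset v₁)
      (f := fun w => if f' w = b then (1:ℚ) else 0) (a := v₂) (by simp [hf2', hab])]
    refine Finset.sum_congr rfl fun w hw => ?_
    rw [hff w (((SimpleGraph.mem_neighborFinset ..).mp (Finset.mem_of_mem_erase hw)).ne')
      (Finset.mem_erase.mp hw).1]
    exact if_congr eq_comm rfl rfl
  have hp1 : Scnt G f v₁ a₀ = ∑ w ∈ (G.neighborFinset v₁).erase v₂,
      if a₀ = f w then (1:ℚ) else 0 := by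
    unfold Scnt
    rw [← Finset.sum_erase (G.neighborFinset v₁)
      (f := fun w => if f w = a₀ then (1:ℚ) else 0) (a := v₂) (by simp [hf2, Ne.symm hab])]
    exact Finset.sum_congr rfl fun w hw => if_congr eq_comm rfl rfl
  have hq2 : Scnt G f' v₂ a₀ = ∑ w ∈ (G.neighborFinset v₂).erase v₁,
      if a₀ = f w then (1:ℚ) else 0 := by
    unfold Scnt
    rw [← Finset.sum_erase (G.neighborFinset v₂)
      (f := fun w => if f' w = a₀ then (1:ℚ) else 0) (a := v₁) (by simp [hf1', Ne.symm hab])]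
    refine Finset.sum_congr rfl fun w hw => ?_
    rw [hff w (Finset.mem_erase.mp hw).1
      (((SimpleGraph.mem_neighborFinset ..).mp (Finset.mem_of_mem_erase hw)).ne')]
    exact if_congr eq_comm rfl rfl
  have hp2 : Scnt G f v₂ b = ∑ w ∈ (G.neighborFinset v₂).erase v₁,
      if b = f w then (1:ℚ) else 0 := by
    unfold Scnt
    rw [← Finset.sum_erase (G.neighborFinset v₂)
      (f := fun w => if f w = b then (1:ℚ) else 0) (a := v₁) (by simp [hf1, hab])]
    exact Finset.sum_congr rfl fun w hw => if_congr eq_comm rfl rfl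
  have hE : ∑ v ∈ (univ.erase v₁).erase v₂, (Scnt G f' v (f' v) - Scnt G f v (f v))
      = (Scnt G f' v₁ b - Scnt G f v₁ a₀) + (Scnt G f' v₂ a₀ - Scnt G f v₂ b) := by
    have step1 : ∑ v ∈ (univ.erase v₁).erase v₂, (Scnt G f' v (f' v) - Scnt G f v (f v))
        = ∑ v ∈ (univ.erase v₁).erase v₂,
            ((if v ∈ G.neighborFinset v₁ then
              ((if b = f v then (1:ℚ) else 0) - (if a₀ = f v then 1 else 0)) else 0)
            + (if v ∈ G.neighborFinset v₂ then
              ((if a₀ = f v then (1:ℚ) else 0) - (if b = f v then 1 else 0)) else 0)) := by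
      refine Finset.sum_congr rfl fun v hvm => ?_
      obtain ⟨hv2, hv1, -⟩ := Finset.mem_erase.mp hvm |>.imp id (fun h => Finset.mem_erase.mp h)
      exact hdiff v hv1 hv2
    rw [step1, Finset.sum_add_distrib, Finset.sum_ite_mem, Finset.sum_ite_mem, hI1, hI2,
        Finset.sum_sub_distrib, Finset.sum_sub_distrib, hq1, hp1, hq2, hp2]
  have split := Finset.add_sum_erase univ
    (fun v => Scnt G f' v (f' v) - Scnt G f v (f v)) (Finset.mem_univ v₁)
  have split2 := Finset.add_sum_erase (univ.erase v₁)
    (fun v => Scnt G f' v (f' v) - Scnt G f v (f v))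
    (Finset.mem_erase.mpr ⟨Ne.symm hv, Finset.mem_univ v₂⟩)
  have total : ∑ v, (Scnt G f' v (f' v) - Scnt G f v (f v))
      = 2 * ((Scnt G f' v₁ b - Scnt G f v₁ a₀) + (Scnt G f' v₂ a₀ - Scnt G f v₂ b)) := by
    rw [← split, ← split2, hE]
    simp only [hf1, hf2, hf1', hf2']
    ring
  have hsub := Finset.sum_sub_distrib (s := (univ : Finset V))
    (f := fun v => Scnt G f' v (f' v)) (g := fun v => Scnt G f v (f v))
  rw [hsub] at total
  linarith

end Aux

/-- in every `k`-swap game with only strategic agents on a connected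
`δ`-regular topology (with as many agents as nodes), there is an assignment that is
simultaneously an equilibrium and maximizes the social welfare over all assignments;
hence the social price of stability on `δ`-regular topologies is `1`. -/
theorem pos_one_regular {A V : Type} [Fintype A] [DecidableEq A]
    [Fintype V] [DecidableEq V] (G : SimpleGraph V) [DecidableRel G.Adj]
    (hconn : G.Connected) (δ k : ℕ) (hreg : G.IsRegularOfDegree δ)
    (c : A → Fin k) (hne : ∀ t : Fin k, ∃ i, c i = t)
    (hcard : Fintype.card A = Fintype.card V) :
    ∃ σ : A ≃ V, isEquilibrium G c σ ∧ ∀ σ' : A ≃ V, SW G c σ' ≤ SW G c σ := by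
  have hA : Nonempty (A ≃ V) := ⟨Fintype.equivOfCardEq hcard⟩
  obtain ⟨σ, hσ⟩ := Finite.exists_max (fun e : A ≃ V => SW G c e)
  refine ⟨σ, ?_, hσ⟩
  rintro ⟨i, j, h1, h2⟩
  have hij : i ≠ j := by
    rintro rfl
    rw [show swapA σ i i = σ by simp [swapA]] at h1
    exact lt_irrefl _ h1
  have hsymm : ∀ v, (swapA σ i j).symm v = Equiv.swap i j (σ.symm v) := by
    intro v; simp [swapA]
  have hup1 : swapA σ i j i = σ j := by simp [swapA]
  have hup2 : swapA σ i j j = σ i := by simp [swapA]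
  -- the two agents have different types
  have hcc : c i ≠ c j := by
    intro hc
    have key : ∀ x : A, c (Equiv.swap i j x) = c x := by
      intro x
      rcases eq_or_ne x i with rfl | hxi
      · simpa [Equiv.swap_apply_left] using hc.symm
      rcases eq_or_ne x j with rfl | hxj
      · simpa [Equiv.swap_apply_right] using hc
      · rw [Equiv.swap_apply_of_ne_of_ne hxi hxj]
    have e1 : util G c (swapA σ i j) i = util G c σ j := by
      unfold util
      rw [hup1]
      congr 2
      refine congrArg Finset.card (Finset.filter_congr ?_)
      intro w _
      simp only [hsymm, key, hc]
    have e2 : util G c (swapA σ i j) j = util G c σ i := by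
      unfold util
      rw [hup2]
      congr 2
      refine congrArg Finset.card (Finset.filter_congr ?_)
      intro w _
      simp only [hsymm, key, hc]
    rw [e1] at h1
    rw [e2] at h2
    exact lt_irrefl _ (h1.trans h2)
  -- the degree is positive
  have hδ : 0 < (δ:ℚ) := by
    rcases Nat.eq_zero_or_pos δ with h0 | h0
    · exfalso
      have hu : ∀ (e : A ≃ V) (a : A), util G c e a = 0 := by
        intro e a
        unfold util
        rw [SimpleGraph.card_neighborFinset_eq_degree, hreg (e a), h0]
        simp
      rw [hu, hu] at h1
      exact lt_irrefl _ h1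
    · exact_mod_cast h0
  have hv12 : σ i ≠ σ j := fun h => hij (σ.injective h)
  have hf1 : (fun v => c (σ.symm v)) (σ i) = c i := by simp
  have hf2 : (fun v => c (σ.symm v)) (σ j) = c j := by simp
  have hf1' : (fun v => c ((swapA σ i j).symm v)) (σ i) = c j := by
    simp [hsymm]
  have hf2' : (fun v => c ((swapA σ i j).symm v)) (σ j) = c i := by
    simp [hsymm]
  have hff : ∀ v, v ≠ σ i → v ≠ σ j →
      (fun v => c ((swapA σ i j).symm v)) v = (fun v => c (σ.symm v)) v := by
    intro v hv1 hv2
    simp only [hsymm]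
    rw [Equiv.swap_apply_of_ne_of_ne
      (fun h => hv1 (by rw [← h, Equiv.apply_symm_apply]))
      (fun h => hv2 (by rw [← h, Equiv.apply_symm_apply]))]
  have key := key_sum G (fun v => c (σ.symm v)) (fun v => c ((swapA σ i j).symm v))
    (σ i) (σ j) (c i) (c j) hv12 hcc hf1 hf2 hf1' hf2' hff
  have hSW : SW G c (swapA σ i j) = SW G c σ +
      2 * ((Scnt G (fun v => c ((swapA σ i j).symm v)) (σ i) (c j)
            - Scnt G (fun v => c (σ.symm v)) (σ i) (c i))
          + (Scnt G (fun v => c ((swapA σ i j).symm v)) (σ j) (c i)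
            - Scnt G (fun v => c (σ.symm v)) (σ j) (c j))) / δ := by
    rw [SW_eq G hreg c (swapA σ i j), SW_eq G hreg c σ, key, add_div]
  have E1 : Scnt G (fun v => c (σ.symm v)) (σ i) (c i) = util G c σ i * δ := by
    rw [util_eq G hreg c σ i, div_mul_cancel₀ _ hδ.ne']
  have E2 : Scnt G (fun v => c (σ.symm v)) (σ j) (c j) = util G c σ j * δ := by
    rw [util_eq G hreg c σ j, div_mul_cancel₀ _ hδ.ne']
  have E3 : Scnt G (fun v => c ((swapA σ i j).symm v)) (σ j) (c i)
      = util G c (swapA σ i j) i * δ := by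
    rw [util_eq G hreg c (swapA σ i j) i, hup1, div_mul_cancel₀ _ hδ.ne']
  have E4 : Scnt G (fun v => c ((swapA σ i j).symm v)) (σ i) (c j)
      = util G c (swapA σ i j) j * δ := by
    rw [util_eq G hreg c (swapA σ i j) j, hup2, div_mul_cancel₀ _ hδ.ne']
  have hlt : SW G c σ < SW G c (swapA σ i j) := by
    rw [hSW, E1, E2, E3, E4]
    have d1 : 0 < util G c (swapA σ i j) i - util G c σ i := sub_pos.mpr h1
    have d2 : 0 < util G c (swapA σ i j) j - util G c σ j := sub_pos.mpr h2
    have hpos : 0 < 2 * ((util G c (swapA σ i j) j * δ - util G c σ i * δ)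
        + (util G c (swapA σ i j) i * δ - util G c σ j * δ)) / δ := by
      apply div_pos _ hδ
      nlinarith [mul_pos hδ d1, mul_pos hδ d2]
    linarith
  exact absurd (hσ (swapA σ i j)) (not_le.mpr hlt)


end SwapGame
end
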